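/- Let 𝔤 be a compact semisimple Lie algebra, B = -Killing form, 𝔥 ⊆ 𝔨 ⊆ 𝔤 subalgebras with B-orthogonal decompositions 𝔤 = 𝔥 + 𝔪₁ + 𝔪₂ and 𝔨 = 𝔥 + 𝔪₁. For x₁, x₂ > 0 let S(x₁,x₂) = d₁/(2x₁) + d₂/(2x₂) - [1,1,1]/(4x₁) - [2,2,2]/(4x₂) - ([1,2,2]/4)(x₁/x₂² + 2/x₁), where dᵢ = dim 𝔪ᵢ. Then the critical points of S subject to the constraint x₁^{d₁} x₂^{d₂} = c (c > 0 a constant) satisfy, with t = x₁/x₂, the equation [1,2,2](2d₁+d₂)t² + (d₁[2,2,2] - 2d₁d₂)t + 2d₁d₂ - 2d₂[1,2,2] - d₂[1,1,1] = 0. -/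

import Mathlib

/-- Lagrange-multiplier reduction (Lemma 1 of the paper): with `dᵢ = dim 𝔪ᵢ` and structure
constants `[1,1,1], [1,2,2], [2,2,2] ≥ 0`, any critical point `(x₁,x₂)`, `x₁,x₂ > 0`, of the
scalar curvature `S(x₁,x₂) = d₁/(2x₁) + d₂/(2x₂) - [1,1,1]/(4x₁) - [2,2,2]/(4x₂)
- ([1,2,2]/4)(x₁/x₂² + 2/x₁)` subject to the volume constraint `x₁^{d₁} x₂^{d₂} = c` satisfies,
with `t = x₁/x₂`,
`[1,2,2](2d₁+d₂)t² + (d₁[2,2,2] - 2d₁d₂)t + 2d₁d₂ - 2d₂[1,2,2] - d₂[1,1,1] = 0`. -/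
theorem stmt8 (d1 d2 : ℕ) (hd1 : 0 < d1) (hd2 : 0 < d2)
    (a111 a122 a222 : ℝ) (h111 : 0 ≤ a111) (h122 : 0 ≤ a122) (h222 : 0 ≤ a222)
    (c : ℝ) (hc : 0 < c) (x1 x2 : ℝ) (hx1 : 0 < x1) (hx2 : 0 < x2)
    (hcon : x1 ^ d1 * x2 ^ d2 = c)
    (lam : ℝ)
    (hcrit1 : deriv (fun x : ℝ => (d1 : ℝ) / (2 * x) + (d2 : ℝ) / (2 * x2)
        - a111 / (4 * x) - a222 / (4 * x2) - (a122 / 4) * (x / x2 ^ 2 + 2 / x)) x1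
      = lam * deriv (fun x : ℝ => x ^ d1 * x2 ^ d2) x1)
    (hcrit2 : deriv (fun y : ℝ => (d1 : ℝ) / (2 * x1) + (d2 : ℝ) / (2 * y)
        - a111 / (4 * x1) - a222 / (4 * y) - (a122 / 4) * (x1 / y ^ 2 + 2 / x1)) x2
      = lam * deriv (fun y : ℝ => x1 ^ d1 * y ^ d2) x2) :
    a122 * (2 * (d1 : ℝ) + d2) * (x1 / x2) ^ 2
      + ((d1 : ℝ) * a222 - 2 * d1 * d2) * (x1 / x2)
      + 2 * (d1 : ℝ) * d2 - 2 * (d2 : ℝ) * a122 - (d2 : ℝ) * a111 = 0 := by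
  have hx1' : x1 ≠ 0 := ne_of_gt hx1
  have hx2' : x2 ≠ 0 := ne_of_gt hx2
  have h2x1 : (2 : ℝ) * x1 ≠ 0 := by positivity
  have h4x1 : (4 : ℝ) * x1 ≠ 0 := by positivity
  have h2x2 : (2 : ℝ) * x2 ≠ 0 := by positivity
  have h4x2 : (4 : ℝ) * x2 ≠ 0 := by positivity
  have hx2sq : x2 ^ 2 ≠ 0 := by positivity
  -- derivative of S in first variable, written with a single cleared denominator
  have H1 : HasDerivAt (fun x : ℝ => (d1 : ℝ) / (2 * x) + (d2 : ℝ) / (2 * x2)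
      - a111 / (4 * x) - a222 / (4 * x2) - (a122 / 4) * (x / x2 ^ 2 + 2 / x))
      (-(((2 * (d1 : ℝ) - a111 - 2 * a122) * x2 ^ 2 + a122 * x1 ^ 2)
        / (4 * x1 ^ 2 * x2 ^ 2))) x1 := by
    have h := (((((hasDerivAt_const x1 (d1 : ℝ)).div
        ((hasDerivAt_id x1).const_mul 2) h2x1).add
        (hasDerivAt_const x1 ((d2 : ℝ) / (2 * x2)))).sub
        ((hasDerivAt_const x1 a111).div ((hasDerivAt_id x1).const_mul 4) h4x1)).sub
        (hasDerivAt_const x1 (a222 / (4 * x2)))).sub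
        ((((hasDerivAt_id x1).div_const (x2 ^ 2)).add
          ((hasDerivAt_const x1 (2 : ℝ)).div (hasDerivAt_id x1) hx1')).const_mul (a122 / 4))
    refine h.congr_deriv ?_
    simp only [id]
    field_simp
    ring
  -- derivative of constraint in first variable
  have Hc1 : HasDerivAt (fun x : ℝ => x ^ d1 * x2 ^ d2)
      ((d1 : ℝ) * x1 ^ (d1 - 1) * x2 ^ d2) x1 := by
    simpa [mul_assoc] using (hasDerivAt_pow d1 x1).mul_const (x2 ^ d2)
  -- derivative of S in second variable
  have H2 : HasDerivAt (fun y : ℝ => (d1 : ℝ) / (2 * x1) + (d2 : ℝ) / (2 * y)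
      - a111 / (4 * x1) - a222 / (4 * y) - (a122 / 4) * (x1 / y ^ 2 + 2 / x1))
      (-(((2 * (d2 : ℝ) - a222) * x2 - 2 * a122 * x1) / (4 * x2 ^ 3))) x2 := by
    have h := ((((hasDerivAt_const x2 ((d1 : ℝ) / (2 * x1))).add
        ((hasDerivAt_const x2 (d2 : ℝ)).div ((hasDerivAt_id x2).const_mul 2) h2x2)).sub
        (hasDerivAt_const x2 (a111 / (4 * x1)))).sub
        ((hasDerivAt_const x2 a222).div ((hasDerivAt_id x2).const_mul 4) h4x2)).sub
        ((((hasDerivAt_const x2 x1).div (hasDerivAt_pow 2 x2) hx2sq).add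
          (hasDerivAt_const x2 (2 / x1))).const_mul (a122 / 4))
    refine h.congr_deriv ?_
    simp only [id]
    field_simp
    ring
  have Hc2 : HasDerivAt (fun y : ℝ => x1 ^ d1 * y ^ d2)
      ((d2 : ℝ) * x2 ^ (d2 - 1) * x1 ^ d1) x2 := by
    simpa [mul_comm, mul_assoc, mul_left_comm] using
      ((hasDerivAt_pow d2 x2).const_mul (x1 ^ d1))
  rw [H1.deriv, Hc1.deriv] at hcrit1
  rw [H2.deriv, Hc2.deriv] at hcrit2
  have hp1 : x1 ^ (d1 - 1) * x1 = x1 ^ d1 := by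
    rw [← pow_succ, Nat.sub_add_cancel hd1]
  have hp2 : x2 ^ (d2 - 1) * x2 = x2 ^ d2 := by
    rw [← pow_succ, Nat.sub_add_cancel hd2]
  -- clear denominators in the two critical-point equations
  have f1 : (2 * (d1 : ℝ) - a111 - 2 * a122) * x2 ^ 2 + a122 * x1 ^ 2
      = -(lam * ((d1 : ℝ) * x1 ^ (d1 - 1) * x2 ^ d2)) * (4 * x1 ^ 2 * x2 ^ 2) := by
    have h : ((2 * (d1 : ℝ) - a111 - 2 * a122) * x2 ^ 2 + a122 * x1 ^ 2)
        / (4 * x1 ^ 2 * x2 ^ 2) = -(lam * ((d1 : ℝ) * x1 ^ (d1 - 1) * x2 ^ d2)) := by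
      linarith [hcrit1]
    exact (div_eq_iff (by positivity)).mp h
  have f2 : (2 * (d2 : ℝ) - a222) * x2 - 2 * a122 * x1
      = -(lam * ((d2 : ℝ) * x2 ^ (d2 - 1) * x1 ^ d1)) * (4 * x2 ^ 3) := by
    have h : ((2 * (d2 : ℝ) - a222) * x2 - 2 * a122 * x1) / (4 * x2 ^ 3)
        = -(lam * ((d2 : ℝ) * x2 ^ (d2 - 1) * x1 ^ d1)) := by
      linarith [hcrit2]
    exact (div_eq_iff (by positivity)).mp h
  -- rewrite the right-hand sides using the constraint
  have g1 : (2 * (d1 : ℝ) - a111 - 2 * a122) * x2 ^ 2 + a122 * x1 ^ 2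
      = -4 * lam * (d1 : ℝ) * c * x1 * x2 ^ 2 := by
    rw [f1, ← hcon]
    linear_combination (-4 * lam * (d1 : ℝ) * x2 ^ d2 * x1 * x2 ^ 2) * hp1
  have g2 : (2 * (d2 : ℝ) - a222) * x2 - 2 * a122 * x1
      = -4 * lam * (d2 : ℝ) * c * x2 ^ 2 := by
    rw [f2, ← hcon]
    linear_combination (-4 * lam * (d2 : ℝ) * x1 ^ d1 * x2 ^ 2) * hp2
  -- polynomial form of the conclusion
  have hgoal : a122 * (2 * (d1 : ℝ) + d2) * x1 ^ 2
      + ((d1 : ℝ) * a222 - 2 * d1 * d2) * x1 * x2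
      + (2 * (d1 : ℝ) * d2 - 2 * (d2 : ℝ) * a122 - (d2 : ℝ) * a111) * x2 ^ 2 = 0 := by
    linear_combination (d2 : ℝ) * g1 - (d1 : ℝ) * x1 * g2
  have h0 : (x2 : ℝ) ^ 2 ≠ 0 := hx2sq
  field_simp
  linear_combination hgoal
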